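/- For every a ∈ A_N, the surrogate value of the optimal candidate satisfies h_{k_opt}(a) ≤ ε + ‖u† − u_{k_opt}‖_{L²(μ)} + c(a) · ‖u† − u_best‖_∞, where c(a) = √(μ(Γ)) + Σ_{i=1}^M w_i |a(x_i)|, and moreover c(a) ≤ 2√(μ(Γ)); consequently H_{k_opt} ≤ ε + ‖u† − u_{k_opt}‖_{L²(μ)} + 2√(μ(Γ)) ‖u† − u_best‖_∞. -/

import Mathlib

open MeasureTheory

private lemma contMap_integrable {Γ : Type*} [TopologicalSpace Γ] [CompactSpace Γ]
    [MeasurableSpace Γ] [BorelSpace Γ] (μ : Measure Γ) [IsFiniteMeasure μ]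
    {g : Γ → ℝ} (hg : Continuous g) : Integrable g μ :=
  memLp_one_iff_integrable.mp
    (hg.memLp_of_hasCompactSupport (HasCompactSupport.of_compactSpace g))

private lemma integral_CS {Γ : Type*} [TopologicalSpace Γ] [CompactSpace Γ]
    [MeasurableSpace Γ] [BorelSpace Γ] (μ : Measure Γ) [IsFiniteMeasure μ]
    {p q : Γ → ℝ} (hp : Continuous p) (hq : Continuous q) :
    ∫ t, p t * q t ∂μ ≤ Real.sqrt (∫ t, (p t)^2 ∂μ) * Real.sqrt (∫ t, (q t)^2 ∂μ) := by
  have hpq : (2:ℝ).HolderConjugate 2 := Real.holderConjugate_iff.mpr ⟨one_lt_two, by norm_num⟩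
  have hp2 : MemLp p (ENNReal.ofReal 2) μ :=
    hp.memLp_of_hasCompactSupport (HasCompactSupport.of_compactSpace p)
  have hq2 : MemLp q (ENNReal.ofReal 2) μ :=
    hq.memLp_of_hasCompactSupport (HasCompactSupport.of_compactSpace q)
  have h1 : ∫ t, p t * q t ∂μ ≤ ∫ t, ‖p t‖ * ‖q t‖ ∂μ := by
    apply integral_mono (contMap_integrable μ (hp.mul hq))
      (contMap_integrable μ (hp.norm.mul hq.norm))
    intro t
    calc p t * q t ≤ |p t * q t| := le_abs_self _
      _ = ‖p t‖ * ‖q t‖ := by rw [abs_mul]; rfl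
  have h2 := integral_mul_norm_le_Lp_mul_Lq (μ := μ) hpq hp2 hq2
  have e : ∀ r : Γ → ℝ, (∫ t, ‖r t‖ ^ (2:ℝ) ∂μ) = ∫ t, (r t)^2 ∂μ := by
    intro r
    apply integral_congr_ae
    filter_upwards with t
    rw [show ((2:ℝ)) = ((2:ℕ):ℝ) by norm_num, Real.rpow_natCast]
    simp [sq_abs, Real.norm_eq_abs]
  rw [e p, e q, ← Real.sqrt_eq_rpow, ← Real.sqrt_eq_rpow] at h2
  exact h1.trans h2

private lemma sum_CS {M : ℕ} (w p q : Fin M → ℝ) (hw : ∀ i, 0 ≤ w i) :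
    ∑ i, w i * (p i * q i) ≤
      Real.sqrt (∑ i, w i * (p i)^2) * Real.sqrt (∑ i, w i * (q i)^2) := by
  calc ∑ i, w i * (p i * q i)
      = ∑ i, (Real.sqrt (w i) * p i) * (Real.sqrt (w i) * q i) := by
        apply Finset.sum_congr rfl; intro i _
        rw [mul_mul_mul_comm, Real.mul_self_sqrt (hw i)]
    _ ≤ Real.sqrt (∑ i, (Real.sqrt (w i) * p i)^2) *
          Real.sqrt (∑ i, (Real.sqrt (w i) * q i)^2) :=
        Real.sum_mul_le_sqrt_mul_sqrt _ _ _
    _ = _ := by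
        congr 2 <;> (apply Finset.sum_congr rfl; intro i _; rw [mul_pow, Real.sq_sqrt (hw i)])

theorem h_opt_bound_via_best_uniform_approximation
    {Γ : Type*} [TopologicalSpace Γ] [CompactSpace Γ] [MeasurableSpace Γ] [BorelSpace Γ]
    (μ : Measure Γ) [IsFiniteMeasure μ]
    (M : ℕ) (x : Fin M → Γ) (w : Fin M → ℝ) (hw : ∀ i, 0 < w i)
    (hsum : ∑ i, w i = (μ Set.univ).toReal)
    (V : Submodule ℝ C(Γ, ℝ)) [FiniteDimensional ℝ V]
    (hquad : ∀ g ∈ V, ∀ gbar ∈ V,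
      ∫ t, g t * gbar t ∂μ = ∑ i, w i * (g (x i) * gbar (x i)))
    (L2norm : C(Γ, ℝ) → ℝ)
    (hL2 : ∀ g : C(Γ, ℝ), L2norm g = Real.sqrt (∫ t, (g t) ^ 2 ∂μ))
    (udag f : C(Γ, ℝ)) (ε : ℝ) (hε : 0 < ε)
    (hnoise : Real.sqrt (∑ i, w i * (udag (x i) - f (x i)) ^ 2) ≤ ε)
    (N : ℕ) (u : Fin N → C(Γ, ℝ)) (huV : ∀ k, u k ∈ V)
    (hne : ∃ k l, u k ≠ u l)
    (A : Set C(Γ, ℝ))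
    (hA : A = {a | ∃ k l, u k ≠ u l ∧ a = (L2norm (u k - u l))⁻¹ • (u k - u l)})
    (h : Fin N → C(Γ, ℝ) → ℝ)
    (hh : ∀ k a, h k a = (∫ t, u k t * a t ∂μ) - ∑ i, w i * (f (x i) * a (x i)))
    (H : Fin N → ℝ)
    (hH : ∀ k, IsGreatest ((fun a => |h k a|) '' A) (H k))
    (kopt : Fin N)
    (hkopt : ∀ k, L2norm (udag - u kopt) ≤ L2norm (udag - u k))
    (ubest : C(Γ, ℝ)) (hubestV : ubest ∈ V)
    (hubest : ∀ v ∈ V, ‖udag - ubest‖ ≤ ‖udag - v‖) :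
    (∀ a ∈ A,
      h kopt a ≤ ε + L2norm (udag - u kopt) +
        (Real.sqrt (μ Set.univ).toReal + ∑ i, w i * |a (x i)|) * ‖udag - ubest‖ ∧
      Real.sqrt (μ Set.univ).toReal + ∑ i, w i * |a (x i)| ≤
        2 * Real.sqrt (μ Set.univ).toReal) ∧
    H kopt ≤ ε + L2norm (udag - u kopt) +
      2 * Real.sqrt (μ Set.univ).toReal * ‖udag - ubest‖ := by
  have hμ : (0:ℝ) ≤ Real.sqrt (μ Set.univ).toReal := Real.sqrt_nonneg _
  have hnn : (0:ℝ) ≤ ‖udag - ubest‖ := norm_nonneg _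
  have hI : ∀ (g1 g2 : C(Γ,ℝ)), Integrable (fun t => g1 t * g2 t) μ := fun g1 g2 =>
    contMap_integrable μ ((map_continuous g1).mul (map_continuous g2))
  have hI' : ∀ (g1 g2 g3 : C(Γ,ℝ)), Integrable (fun t => (g1 t - g2 t) * g3 t) μ :=
    fun g1 g2 g3 => contMap_integrable μ
      (((map_continuous g1).sub (map_continuous g2)).mul (map_continuous g3))
  have hnormpt : ∀ t, |udag t - ubest t| ≤ ‖udag - ubest‖ := by
    intro t
    have := (udag - ubest).norm_coe_le_norm t
    simpa [Real.norm_eq_abs] using this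
  have key : ∀ a ∈ A,
      h kopt a ≤ ε + L2norm (udag - u kopt) +
        (Real.sqrt (μ Set.univ).toReal + ∑ i, w i * |a (x i)|) * ‖udag - ubest‖ ∧
      Real.sqrt (μ Set.univ).toReal + ∑ i, w i * |a (x i)| ≤
        2 * Real.sqrt (μ Set.univ).toReal := by
    intro a haA
    rw [hA] at haA
    obtain ⟨k, l, hkl, hae⟩ := haA
    have haV : a ∈ V := by rw [hae]; exact V.smul_mem _ (V.sub_mem (huV k) (huV l))
    set SqA := ∫ t, (a t)^2 ∂μ with hSqA
    have hcnn : 0 ≤ L2norm (u k - u l) := by rw [hL2]; exact Real.sqrt_nonneg _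
    have ha1 : Real.sqrt SqA ≤ 1 := by
      have hd : SqA = ((L2norm (u k - u l))⁻¹)^2 * ∫ t, ((u k - u l) t)^2 ∂μ := by
        rw [hSqA, hae, ← integral_const_mul]
        apply integral_congr_ae; filter_upwards with t
        simp [mul_pow]
      rw [hd, Real.sqrt_mul (by positivity), Real.sqrt_sq (by positivity),
        ← hL2 (u k - u l)]
      rcases eq_or_lt_of_le hcnn with h0 | h0
      · rw [← h0]; simp
      · rw [inv_mul_cancel₀ h0.ne']
    have hSq_quad : SqA = ∑ i, w i * (a (x i))^2 := by
      rw [hSqA]; simp only [sq]; exact hquad a haV a haV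
    -- B1
    have B1 : (∫ t, (u kopt t - udag t) * a t ∂μ) ≤ L2norm (udag - u kopt) := by
      have hcs : ∫ t, (u kopt t - udag t) * a t ∂μ ≤
          Real.sqrt (∫ t, (u kopt t - udag t)^2 ∂μ) * Real.sqrt SqA :=
        integral_CS μ ((map_continuous (u kopt)).sub (map_continuous udag))
          (map_continuous a)
      have heq : (∫ t, (u kopt t - udag t)^2 ∂μ) = ∫ t, ((udag - u kopt) t)^2 ∂μ := by
        apply integral_congr_ae; filter_upwards with t
        simp only [ContinuousMap.sub_apply]; ring
      rw [heq, ← hL2] at hcs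
      have hLnn : 0 ≤ L2norm (udag - u kopt) := by rw [hL2]; exact Real.sqrt_nonneg _
      have := mul_le_mul_of_nonneg_left ha1 hLnn
      linarith
    -- B2
    have B2 : (∫ t, (udag t - ubest t) * a t ∂μ) ≤
        Real.sqrt (μ Set.univ).toReal * ‖udag - ubest‖ := by
      have s1 : (∫ t, (udag t - ubest t) * a t ∂μ) ≤ ∫ t, ‖udag - ubest‖ * |a t| ∂μ := by
        apply integral_mono (hI' udag ubest a)
          (contMap_integrable μ (continuous_const.mul (map_continuous a).abs))
        intro t
        calc (udag t - ubest t) * a t ≤ |udag t - ubest t| * |a t| := by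
              rw [← abs_mul]; exact le_abs_self _
          _ ≤ ‖udag - ubest‖ * |a t| := mul_le_mul_of_nonneg_right (hnormpt t) (abs_nonneg _)
      rw [integral_const_mul] at s1
      have s2 : (∫ t, |a t| ∂μ) ≤ Real.sqrt (μ Set.univ).toReal * Real.sqrt SqA := by
        have hcs := integral_CS μ (continuous_const : Continuous fun _ : Γ => (1:ℝ))
          (map_continuous a).abs
        have e1' : (∫ t, (1:ℝ) * |a t| ∂μ) = ∫ t, |a t| ∂μ := by simp
        have e2' : (∫ _ : Γ, ((1:ℝ))^2 ∂μ) = (μ Set.univ).toReal := by simp [Measure.real]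
        have e3' : (∫ t, |a t|^2 ∂μ) = SqA := by
          rw [hSqA]; apply integral_congr_ae; filter_upwards with t; rw [sq_abs]
        rw [e1', e2', e3'] at hcs; exact hcs
      calc (∫ t, (udag t - ubest t) * a t ∂μ) ≤ ‖udag - ubest‖ * ∫ t, |a t| ∂μ := s1
        _ ≤ ‖udag - ubest‖ * (Real.sqrt (μ Set.univ).toReal * Real.sqrt SqA) :=
            mul_le_mul_of_nonneg_left s2 hnn
        _ ≤ ‖udag - ubest‖ * (Real.sqrt (μ Set.univ).toReal * 1) :=
            mul_le_mul_of_nonneg_left (mul_le_mul_of_nonneg_left ha1 hμ) hnn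
        _ = Real.sqrt (μ Set.univ).toReal * ‖udag - ubest‖ := by ring
    -- B3
    have B3 : (∑ i, w i * ((ubest (x i) - udag (x i)) * a (x i)))
        ≤ (∑ i, w i * |a (x i)|) * ‖udag - ubest‖ := by
      rw [Finset.sum_mul]
      apply Finset.sum_le_sum; intro i _
      have h1 : (ubest (x i) - udag (x i)) * a (x i) ≤ ‖udag - ubest‖ * |a (x i)| := by
        calc (ubest (x i) - udag (x i)) * a (x i)
            ≤ |ubest (x i) - udag (x i)| * |a (x i)| := by
              rw [← abs_mul]; exact le_abs_self _
          _ ≤ ‖udag - ubest‖ * |a (x i)| := by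
              apply mul_le_mul_of_nonneg_right _ (abs_nonneg _)
              rw [abs_sub_comm]; exact hnormpt (x i)
      calc w i * ((ubest (x i) - udag (x i)) * a (x i))
          ≤ w i * (‖udag - ubest‖ * |a (x i)|) := mul_le_mul_of_nonneg_left h1 (hw i).le
        _ = w i * |a (x i)| * ‖udag - ubest‖ := by ring
    -- B4
    have B4 : (∑ i, w i * ((udag (x i) - f (x i)) * a (x i))) ≤ ε := by
      have hcs := sum_CS w (fun i => udag (x i) - f (x i)) (fun i => a (x i))
        (fun i => (hw i).le)
      rw [← hSq_quad] at hcs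
      have hmm : Real.sqrt (∑ i, w i * (udag (x i) - f (x i))^2) * Real.sqrt SqA ≤ ε * 1 :=
        mul_le_mul hnoise ha1 (Real.sqrt_nonneg _) hε.le
      simpa using hcs.trans hmm
    -- c(a) bound
    have csum : (∑ i, w i * |a (x i)|) ≤ Real.sqrt (μ Set.univ).toReal := by
      have hcs := sum_CS w (fun _ => (1:ℝ)) (fun i => |a (x i)|) (fun i => (hw i).le)
      simp only [one_mul, one_pow, mul_one, sq_abs] at hcs
      rw [hsum, ← hSq_quad] at hcs
      calc (∑ i, w i * |a (x i)|)
          ≤ Real.sqrt (μ Set.univ).toReal * Real.sqrt SqA := hcs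
        _ ≤ Real.sqrt (μ Set.univ).toReal * 1 := mul_le_mul_of_nonneg_left ha1 hμ
        _ = Real.sqrt (μ Set.univ).toReal := mul_one _
    -- decomposition
    have e1 : (∫ t, (u kopt t - udag t) * a t ∂μ) + (∫ t, (udag t - ubest t) * a t ∂μ)
        = (∫ t, u kopt t * a t ∂μ) - ∫ t, ubest t * a t ∂μ := by
      rw [← integral_add (hI' (u kopt) udag a) (hI' udag ubest a),
          ← integral_sub (hI (u kopt) a) (hI ubest a)]
      apply integral_congr_ae; filter_upwards with t; ring
    have e2 : (∑ i, w i * ((ubest (x i) - udag (x i)) * a (x i)))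
        + (∑ i, w i * ((udag (x i) - f (x i)) * a (x i)))
        = (∑ i, w i * (ubest (x i) * a (x i))) - ∑ i, w i * (f (x i) * a (x i)) := by
      rw [← Finset.sum_add_distrib, ← Finset.sum_sub_distrib]
      apply Finset.sum_congr rfl; intro i _; ring
    have hqb := hquad ubest hubestV a haV
    have hdecomp := hh kopt a
    constructor
    · rw [add_mul]
      linarith
    · linarith
  refine ⟨key, ?_⟩
  obtain ⟨a₀, ha₀A, ha₀eq⟩ := (hH kopt).1
  have hnegA : -a₀ ∈ A := by
    rw [hA] at ha₀A ⊢
    obtain ⟨k, l, hkl, hae⟩ := ha₀A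
    have hLeq : L2norm (u l - u k) = L2norm (u k - u l) := by
      rw [hL2, hL2]; congr 1
      apply integral_congr_ae; filter_upwards with t
      simp only [ContinuousMap.sub_apply]; ring
    refine ⟨l, k, hkl.symm, ?_⟩
    rw [hae, hLeq, ← smul_neg, neg_sub]
  have hneg : h kopt (-a₀) = - h kopt a₀ := by
    rw [hh, hh]
    have i1 : (∫ t, u kopt t * (-a₀) t ∂μ) = -∫ t, u kopt t * a₀ t ∂μ := by
      rw [← integral_neg]; apply integral_congr_ae; filter_upwards with t; simp
    have i2 : (∑ i, w i * (f (x i) * (-a₀) (x i))) = -∑ i, w i * (f (x i) * a₀ (x i)) := by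
      rw [← Finset.sum_neg_distrib]; apply Finset.sum_congr rfl; intro i _
      simp
    rw [i1, i2]; ring
  obtain ⟨hb1, hb2⟩ := key a₀ ha₀A
  obtain ⟨hb1', hb2'⟩ := key (-a₀) hnegA
  have hm1 := mul_le_mul_of_nonneg_right hb2 hnn
  have hm2 := mul_le_mul_of_nonneg_right hb2' hnn
  have heq : |h kopt a₀| = H kopt := ha₀eq
  rw [← heq]
  rw [hneg] at hb1'
  apply abs_le.mpr
  constructor <;> linarith
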